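/- Let C be a Λ-MT code with block lengths (m_1,…,m_ℓ), where Λ = (λ_1,…,λ_ℓ), and set Δ = (λ_1^{−1},…,λ_ℓ^{−1}). Let L : F_q^n → F_q^n be the permutation that reverses the coordinates within each block. Then L(C) = {L(c) : c ∈ C} is a Δ-MT code with block lengths (m_1,…,m_ℓ), and B^T is a GPM of L(C), where H is a GPM of the Euclidean dual C^⊥ and B is the polynomial matrix satisfying the identical equation B·H = diag(x^{m_1}−λ_1^{−1},…,x^{m_ℓ}−λ_ℓ^{−1}). -/

import Mathlib

open Polynomial Matrix

/-- constacyclic shift with constant `lam` on one block of length `m`: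
`(a₀, …, a_{m-1}) ↦ (lam * a_{m-1}, a₀, …, a_{m-2})`. -/
def blockShift {F : Type*} [Field F] (lam : F) {m : ℕ} (a : Fin m → F) : Fin m → F :=
  fun j => if j.val = 0 then lam * a ⟨m - 1, by have := j.isLt; omega⟩
           else a ⟨j.val - 1, by have := j.isLt; omega⟩

/-- `CC ⊆ ⊕ᵢ F^{m i}` is a Λ-multi-twisted code: it is invariant under the blockwise
constacyclic shift `T_Λ`. -/
def IsMT {F : Type*} [Field F] {ℓ : ℕ} (lam : Fin ℓ → F) {m : Fin ℓ → ℕ}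
    (CC : Submodule F (∀ i, Fin (m i) → F)) : Prop :=
  ∀ v ∈ CC, (fun i => blockShift (lam i) (v i)) ∈ CC

/-- from a polynomial vector in `(F[x])^ℓ` to a blocked vector: reduce component `i`
modulo `x^{m i} - λᵢ` and take the coefficients. -/
noncomputable def toCode {F : Type*} [Field F] {ℓ : ℕ} (lam : Fin ℓ → F) (m : Fin ℓ → ℕ)
    (q : Fin ℓ → Polynomial F) : ∀ i, Fin (m i) → F :=
  fun i j => ((q i) %ₘ (X ^ (m i) - Polynomial.C (lam i))).coeff j

/-- `G` is a generator polynomial matrix (GPM) of the Λ-MT code `CC`: its rows form a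
minimal generating set (equivalently, since the corresponding submodule of `(F[x])^ℓ` has
rank `ℓ`, a linearly independent generating set) of the `F[x]`-submodule of `(F[x])^ℓ`
corresponding to `CC`, namely `{q | toCode lam m q ∈ CC}`. -/
def IsGPM {F : Type*} [Field F] {ℓ : ℕ} (lam : Fin ℓ → F) (m : Fin ℓ → ℕ)
    (CC : Submodule F (∀ i, Fin (m i) → F))
    (G : Matrix (Fin ℓ) (Fin ℓ) (Polynomial F)) : Prop :=
  LinearIndependent (Polynomial F) (fun i => G i) ∧
  (Submodule.span (Polynomial F) (Set.range (fun i => G i)) :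
      Set (Fin ℓ → Polynomial F)) = {q | toCode lam m q ∈ CC}

/-- Euclidean dual of a blocked code. -/
def dualCodeMT {F : Type*} [Field F] {ℓ : ℕ} {m : Fin ℓ → ℕ}
    (CC : Submodule F (∀ i, Fin (m i) → F)) : Submodule F (∀ i, Fin (m i) → F) where
  carrier := {v | ∀ c ∈ CC, ∑ i, ∑ j, c i j * v i j = 0}
  zero_mem' := by intro c hc; simp
  add_mem' := by
    intro a b ha hb c hc
    simp only [Set.mem_setOf_eq] at *
    simp only [Pi.add_apply, mul_add, Finset.sum_add_distrib, ha c hc, hb c hc, add_zero]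
  smul_mem' := by
    intro r v hv c hc
    simp only [Set.mem_setOf_eq] at *
    have h1 : ∀ i, ∑ j, c i j * (r • v) i j = r * ∑ j, c i j * v i j := by
      intro i
      rw [Finset.mul_sum]
      exact Finset.sum_congr rfl (fun j _ => by simp only [Pi.smul_apply, smul_eq_mul]; ring)
    simp only [h1, ← Finset.mul_sum, hv c hc, mul_zero]

/-- the permutation of a blocked vector reversing the coordinates within each block. -/
def revEach {F : Type*} [Field F] {ℓ : ℕ} {m : Fin ℓ → ℕ} :
    (∀ i, Fin (m i) → F) →ₗ[F] (∀ i, Fin (m i) → F) where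
  toFun v := fun i j => v i j.rev
  map_add' _ _ := rfl
  map_smul' _ _ := rfl



namespace Stmt6Helpers

variable {F : Type*} [Field F]

theorem mod_add_mul_cancel (f s a : Polynomial F) (hf : f.Monic) :
    (f * s + a) %ₘ f = a %ₘ f := by
  rw [add_modByMonic, (modByMonic_eq_zero_iff_dvd hf).2 ⟨s, rfl⟩, zero_add]

theorem natDegree_mod_lt (p : Polynomial F) {f : Polynomial F} (hf : f.Monic)
    (h1 : 1 ≤ f.natDegree) : (p %ₘ f).natDegree < f.natDegree := by
  by_cases h0 : p %ₘ f = 0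
  · rw [h0]; simp; omega
  · exact natDegree_lt_natDegree h0 (degree_modByMonic_lt p hf)

theorem coeff_X_mul_pred (p : Polynomial F) {k : ℕ} (hk : k ≠ 0) :
    (X * p).coeff k = p.coeff (k - 1) := by
  obtain ⟨k, rfl⟩ := Nat.exists_eq_succ_of_ne_zero hk
  rw [coeff_X_mul]
  rfl

theorem mul_mod_eq (f p q : Polynomial F) (hf : f.Monic) :
    (p * q) %ₘ f = ((p %ₘ f) * (q %ₘ f)) %ₘ f := by
  have h : p * q = f * ((p /ₘ f) * (q %ₘ f) + (p %ₘ f) * (q /ₘ f) + f * (p /ₘ f) * (q /ₘ f))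
      + (p %ₘ f) * (q %ₘ f) := by
    conv_lhs => rw [← modByMonic_add_div p f, ← modByMonic_add_div q f]
    ring
  rw [h, mod_add_mul_cancel _ _ _ hf]

theorem coeff_mul_monic_mod (f g a : Polynomial F) (hf : f.Monic) (hg : g.Monic)
    (h1 : 1 ≤ f.natDegree) :
    ((a * g) %ₘ (f * g)).coeff (f.natDegree + g.natDegree - 1)
      = (a %ₘ f).coeff (f.natDegree - 1) := by
  have hfg : (f * g).Monic := hf.mul hg
  have h2 : a * g = (f * g) * (a /ₘ f) + (a %ₘ f) * g := by
    conv_lhs => rw [← modByMonic_add_div a f]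
    ring
  have hdeg : ((a %ₘ f) * g).degree < (f * g).degree := by
    by_cases h0 : a %ₘ f = 0
    · rw [h0, zero_mul, degree_zero]
      exact bot_lt_iff_ne_bot.2 (fun hbot => hfg.ne_zero (degree_eq_bot.1 hbot))
    · have hne : (a %ₘ f) * g ≠ 0 := mul_ne_zero h0 hg.ne_zero
      rw [degree_eq_natDegree hne, degree_eq_natDegree hfg.ne_zero, Nat.cast_lt,
        natDegree_mul h0 hg.ne_zero, natDegree_mul hf.ne_zero hg.ne_zero]
      have := natDegree_mod_lt a hf h1
      omega
  have h3 : (a * g) %ₘ (f * g) = (a %ₘ f) * g := by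
    rw [h2, mod_add_mul_cancel _ _ _ hfg, (modByMonic_eq_self_iff hfg).2 hdeg]
  have hndmod : (a %ₘ f).natDegree ≤ f.natDegree - 1 := by
    have := natDegree_mod_lt a hf h1; omega
  rw [h3, coeff_mul]
  rw [Finset.sum_eq_single (f.natDegree - 1, g.natDegree)]
  · simp [hg.coeff_natDegree]
  · rintro ⟨u, v⟩ hmem hne
    rw [Finset.HasAntidiagonal.mem_antidiagonal] at hmem
    simp only at hmem ⊢
    rcases lt_or_ge u f.natDegree with hu | hu
    · have hv : g.natDegree < v := by
        by_contra hvle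
        push_neg at hvle
        have hu' : u = f.natDegree - 1 := by omega
        have hv' : v = g.natDegree := by omega
        exact hne (by rw [hu', hv'])
      rw [coeff_eq_zero_of_natDegree_lt hv, mul_zero]
    · have : (a %ₘ f).natDegree < u := lt_of_lt_of_le (natDegree_mod_lt a hf h1) hu
      rw [coeff_eq_zero_of_natDegree_lt this, zero_mul]
  · intro hnot
    exact absurd (Finset.HasAntidiagonal.mem_antidiagonal.2 (by omega)) hnot

theorem dvd_of_forall_coeff_mod (Δ G : Polynomial F) (hΔ : Δ.Monic)
    (h : ∀ r, ((r * G) %ₘ Δ).coeff (Δ.natDegree - 1) = 0) : Δ ∣ G := by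
  by_cases hn : Δ.natDegree = 0
  · rw [hΔ.natDegree_eq_zero.1 hn]
    exact one_dvd _
  rw [← modByMonic_eq_zero_iff_dvd hΔ]
  by_contra hG
  have hdeg : (G %ₘ Δ).natDegree < Δ.natDegree :=
    natDegree_lt_natDegree hG (degree_modByMonic_lt G hΔ)
  set k := Δ.natDegree - 1 - (G %ₘ Δ).natDegree with hk
  have h1 : X ^ k * G = Δ * (X ^ k * (G /ₘ Δ)) + X ^ k * (G %ₘ Δ) := by
    conv_lhs => rw [← modByMonic_add_div G Δ]
    ring
  have hXG : X ^ k * (G %ₘ Δ) ≠ 0 := mul_ne_zero (pow_ne_zero _ X_ne_zero) hG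
  have hnd : (X ^ k * (G %ₘ Δ)).natDegree = Δ.natDegree - 1 := by
    rw [natDegree_mul (pow_ne_zero _ X_ne_zero) hG, natDegree_X_pow]; omega
  have h2 : (X ^ k * G) %ₘ Δ = X ^ k * (G %ₘ Δ) := by
    rw [h1, mod_add_mul_cancel _ _ _ hΔ]
    refine (modByMonic_eq_self_iff hΔ).2 ?_
    rw [degree_eq_natDegree hXG, degree_eq_natDegree hΔ.ne_zero, Nat.cast_lt, hnd]
    omega
  have h3 := h (X ^ k)
  rw [h2] at h3
  have he : Δ.natDegree - 1 = (G %ₘ Δ).natDegree + k := by omega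
  rw [he, coeff_X_pow_mul] at h3
  have : (G %ₘ Δ).leadingCoeff = 0 := h3
  exact hG (leadingCoeff_eq_zero.1 this)

theorem X_mul_mod_coeff {m : ℕ} (hm : 0 < m) (d : F) (q : Polynomial F) {j : ℕ} (hj : j < m) :
    ((X * q) %ₘ (X ^ m - C d)).coeff j
      = if j = 0 then d * ((q %ₘ (X ^ m - C d)).coeff (m - 1))
        else (q %ₘ (X ^ m - C d)).coeff (j - 1) := by
  have hf : (X ^ m - C d : Polynomial F).Monic := monic_X_pow_sub_C d hm.ne'
  set f : Polynomial F := X ^ m - C d with hfdef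
  set a : Polynomial F := q %ₘ f with hadef
  set c : F := a.coeff (m - 1) with hcdef
  have hnda : a.natDegree < m := by
    have h1 : (1 : ℕ) ≤ f.natDegree := by
      rw [hfdef, natDegree_X_pow_sub_C]; omega
    have := natDegree_mod_lt q hf h1
    rwa [hfdef, natDegree_X_pow_sub_C] at this
  have hcoefff : ∀ k, f.coeff k = (if k = m then 1 else 0) - (if k = 0 then d else 0) := by
    intro k
    rw [hfdef, coeff_sub, coeff_X_pow, coeff_C]
  have h1 : X * q = f * (X * (q /ₘ f)) + X * a := by
    conv_lhs => rw [← modByMonic_add_div q f]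
    ring
  have h2 : X * a = f * C c + (X * a - C c * f) := by ring
  have hw : ∀ k, m ≤ k → (X * a - C c * f).coeff k = 0 := by
    intro k hk
    rcases Nat.eq_or_lt_of_le hk with he | hlt
    · subst he
      rw [coeff_sub, coeff_X_mul_pred _ hm.ne', coeff_C_mul, hcoefff,
        if_pos rfl, if_neg hm.ne']
      ring
    · rw [coeff_sub, coeff_X_mul_pred _ (by omega), coeff_C_mul, hcoefff,
        coeff_eq_zero_of_natDegree_lt (by omega : a.natDegree < k - 1),
        if_neg (by omega), if_neg (by omega)]
      ring
  have hmod : (X * q) %ₘ f = X * a - C c * f := by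
    conv_lhs => rw [h1]
    rw [mod_add_mul_cancel _ _ _ hf]
    conv_lhs => rw [h2]
    rw [mod_add_mul_cancel _ _ _ hf]
    refine (modByMonic_eq_self_iff hf).2 ?_
    have hdf : f.degree = (m : ℕ) := by rw [hfdef]; exact degree_X_pow_sub_C hm d
    rw [hdf, degree_lt_iff_coeff_zero]
    intro k hk
    exact hw k hk
  rw [hmod]
  by_cases hj0 : j = 0
  · subst hj0
    rw [if_pos rfl, coeff_sub, mul_coeff_zero, coeff_X_zero, coeff_C_mul, hcoefff,
      if_neg (by omega), if_pos rfl]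
    ring
  · rw [if_neg hj0, coeff_sub, coeff_X_mul_pred _ hj0, coeff_C_mul, hcoefff,
      if_neg (by omega), if_neg hj0]
    ring

theorem coeff_mul_mod_eq_sum {m : ℕ} (hm : 0 < m) (d : F) (p q : Polynomial F) :
    ((p * q) %ₘ (X ^ m - C d)).coeff (m - 1)
      = ∑ j : Fin m, ((p %ₘ (X ^ m - C d)).coeff (j : ℕ))
          * ((q %ₘ (X ^ m - C d)).coeff (m - 1 - (j : ℕ))) := by
  have hf : (X ^ m - C d : Polynomial F).Monic := monic_X_pow_sub_C d hm.ne'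
  set f : Polynomial F := X ^ m - C d with hfdef
  have hndf : f.natDegree = m := by rw [hfdef]; exact natDegree_X_pow_sub_C
  set a : Polynomial F := p %ₘ f with hadef
  set b : Polynomial F := q %ₘ f with hbdef
  have hnda : a.natDegree ≤ m - 1 := by
    have h := natDegree_mod_lt p hf (by rw [hndf]; omega)
    rw [← hadef, hndf] at h
    omega
  have hndb : b.natDegree ≤ m - 1 := by
    have h := natDegree_mod_lt q hf (by rw [hndf]; omega)
    rw [← hbdef, hndf] at h
    omega
  have hmodeq : (p * q) %ₘ f = (a * b) %ₘ f := mul_mod_eq f p q hf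
  have hh : ((a * b) /ₘ f).coeff (m - 1) = 0 := by
    by_contra hh
    have hh0 : (a * b) /ₘ f ≠ 0 := fun h0 => hh (by simp [h0])
    have hle : m - 1 ≤ ((a * b) /ₘ f).natDegree := le_natDegree_of_ne_zero hh
    have h2 : (f * ((a * b) /ₘ f)).natDegree = m + ((a * b) /ₘ f).natDegree := by
      rw [natDegree_mul hf.ne_zero hh0, hndf]
    have h3 : f * ((a * b) /ₘ f) = a * b - (a * b) %ₘ f := by
      rw [eq_sub_iff_add_eq, add_comm]
      exact modByMonic_add_div _ f
    have hab : (a * b).natDegree ≤ 2 * m - 2 := le_trans natDegree_mul_le (by omega)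
    have hm2 : ((a * b) %ₘ f).natDegree ≤ m - 1 := by
      have h := natDegree_mod_lt (a * b) hf (by rw [hndf]; omega)
      rw [hndf] at h
      omega
    have h4 : (a * b - (a * b) %ₘ f).natDegree ≤ 2 * m - 2 :=
      le_trans (natDegree_sub_le _ _) (max_le hab (le_trans hm2 (by omega)))
    rw [h3] at h2
    omega
  have hfq : (f * ((a * b) /ₘ f)).coeff (m - 1) = 0 := by
    calc (f * ((a * b) /ₘ f)).coeff (m - 1)
        = (X ^ m * ((a * b) /ₘ f)).coeff (m - 1) - d * ((a * b) /ₘ f).coeff (m - 1) := by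
          rw [hfdef, sub_mul, coeff_sub, coeff_C_mul]
      _ = 0 := by
          rw [hh, mul_zero, sub_zero, coeff_X_pow_mul', if_neg (by omega)]
  have hstep : ((a * b) %ₘ f).coeff (m - 1) = (a * b).coeff (m - 1) := by
    conv_rhs => rw [← modByMonic_add_div (a * b) f]
    rw [add_comm, coeff_add, hfq, zero_add]
  rw [hmodeq, hstep, coeff_mul, Finset.Nat.sum_antidiagonal_eq_sum_range_succ_mk]
  rw [show (m - 1).succ = m by omega,
    ← Fin.sum_univ_eq_sum_range (fun k => a.coeff k * b.coeff (m - 1 - k)) m]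

theorem exists_poly_coeff {m : ℕ} (hm : 0 < m) (d : F) (v : Fin m → F) :
    ∃ p : Polynomial F, ∀ j : Fin m, (p %ₘ (X ^ m - C d)).coeff (j : ℕ) = v j := by
  classical
  have hco : ∀ k : ℕ, (∑ j : Fin m, C (v j) * X ^ (j : ℕ)).coeff k
      = if h : k < m then v ⟨k, h⟩ else 0 := by
    intro k
    rw [finset_sum_coeff]
    simp only [coeff_C_mul, coeff_X_pow]
    by_cases h : k < m
    · rw [dif_pos h, Finset.sum_eq_single (⟨k, h⟩ : Fin m)]
      · simp
      · intro b _ hb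
        rw [if_neg fun hc => hb (Fin.ext hc.symm), mul_zero]
      · intro h'
        exact absurd (Finset.mem_univ _) h'
    · rw [dif_neg h, Finset.sum_eq_zero]
      intro b _
      have := b.isLt
      rw [if_neg (by omega), mul_zero]
  have hdeg : (∑ j : Fin m, C (v j) * X ^ (j : ℕ)).degree < ((m : ℕ) : WithBot ℕ) := by
    rw [degree_lt_iff_coeff_zero]
    intro k hk
    rw [hco k, dif_neg (by omega)]
  refine ⟨∑ j : Fin m, C (v j) * X ^ (j : ℕ), fun j => ?_⟩
  rw [(modByMonic_eq_self_iff (monic_X_pow_sub_C d hm.ne')).2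
    (by rw [degree_X_pow_sub_C hm]; exact hdeg), hco]
  rw [dif_pos j.isLt]

end Stmt6Helpers

theorem mem_dualCodeMT {F : Type*} [Field F] {ℓ : ℕ} {m : Fin ℓ → ℕ}
    {CC : Submodule F (∀ i, Fin (m i) → F)} {v : ∀ i, Fin (m i) → F} :
    v ∈ dualCodeMT CC ↔ ∀ c ∈ CC, ∑ i, ∑ j, c i j * v i j = 0 := Iff.rfl

theorem dualCodeMT_dualCodeMT {F : Type*} [Field F] {ℓ : ℕ} {m : Fin ℓ → ℕ}
    (CC : Submodule F (∀ i, Fin (m i) → F)) :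
    dualCodeMT (dualCodeMT CC) = CC := by
  classical
  let e : (∀ i, Fin (m i) → F) →ₗ[F] Module.Dual F (∀ i, Fin (m i) → F) :=
    { toFun := fun v =>
        { toFun := fun c => ∑ i, ∑ j, c i j * v i j
          map_add' := fun c c' => by
            simp only [Pi.add_apply, add_mul, Finset.sum_add_distrib]
          map_smul' := fun r c => by
            simp only [Pi.smul_apply, smul_eq_mul, RingHom.id_apply]
            rw [Finset.mul_sum]
            refine Finset.sum_congr rfl fun i _ => ?_
            rw [Finset.mul_sum]
            exact Finset.sum_congr rfl fun j _ => by ring }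
      map_add' := fun v v' => by
        refine LinearMap.ext fun c => ?_
        show ∑ i, ∑ j, c i j * (v + v') i j
            = (∑ i, ∑ j, c i j * v i j) + ∑ i, ∑ j, c i j * v' i j
        simp only [Pi.add_apply, mul_add, Finset.sum_add_distrib]
      map_smul' := fun r v => by
        refine LinearMap.ext fun c => ?_
        show ∑ i, ∑ j, c i j * (r • v) i j = r * ∑ i, ∑ j, c i j * v i j
        simp only [Pi.smul_apply, smul_eq_mul]
        rw [Finset.mul_sum]
        refine Finset.sum_congr rfl fun i _ => ?_
        rw [Finset.mul_sum]
        exact Finset.sum_congr rfl fun j _ => by ring }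
  have happly : ∀ (v c : ∀ i, Fin (m i) → F), e v c = ∑ i, ∑ j, c i j * v i j :=
    fun v c => rfl
  have hsingle : ∀ (v : ∀ i, Fin (m i) → F) (i : Fin ℓ) (j : Fin (m i)),
      e v (Pi.single i (Pi.single j (1 : F))) = v i j := by
    intro v i j
    rw [happly]
    rw [Finset.sum_eq_single i]
    · rw [Finset.sum_eq_single j]
      · rw [Pi.single_eq_same, Pi.single_eq_same, one_mul]
      · intro b _ hb
        rw [Pi.single_eq_same, Pi.single_eq_of_ne hb, zero_mul]
      · intro h; exact absurd (Finset.mem_univ _) h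
    · intro b _ hb
      rw [Pi.single_eq_of_ne hb]
      simp
    · intro h; exact absurd (Finset.mem_univ _) h
  have einj : Function.Injective e := by
    intro v w h
    funext i j
    have h2 := congrArg (fun φ => φ (Pi.single i (Pi.single j (1 : F)))) h
    rw [hsingle, hsingle] at h2
    exact h2
  have esurj : Function.Surjective e :=
    (LinearMap.injective_iff_surjective_of_finrank_eq_finrank
      (Subspace.dual_finrank_eq).symm).1 einj
  ext w
  rw [mem_dualCodeMT]
  constructor
  · intro h
    have hmem : w ∈ Submodule.dualCoannihilator (Submodule.dualAnnihilator CC) := by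
      rw [Submodule.mem_dualCoannihilator]
      intro φ hφ
      obtain ⟨v, rfl⟩ := esurj φ
      have hv : v ∈ dualCodeMT CC := by
        rw [mem_dualCodeMT]
        intro c hc
        have := (Submodule.mem_dualAnnihilator _).1 hφ c hc
        rwa [happly] at this
      have h2 := h v hv
      rw [happly]
      calc ∑ i, ∑ j, w i j * v i j = ∑ i, ∑ j, v i j * w i j :=
            Finset.sum_congr rfl fun i _ => Finset.sum_congr rfl fun j _ => mul_comm _ _
        _ = 0 := h2
    rwa [Subspace.dualAnnihilator_dualCoannihilator_eq] at hmem
  · intro hw v hv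
    rw [mem_dualCodeMT] at hv
    calc ∑ i, ∑ j, v i j * w i j = ∑ i, ∑ j, w i j * v i j :=
          Finset.sum_congr rfl fun i _ => Finset.sum_congr rfl fun j _ => mul_comm _ _
      _ = 0 := hv w hw

open Stmt6Helpers in
/-- Let `C` be a Λ-MT code with block lengths `(m₁,…,m_ℓ)` and set
`Δ = Λ⁻¹`.  Then `L(C)` (reverse the coordinates within each block of every codeword) is a
Δ-MT code with the same block lengths, and `Bᵀ` is a GPM of `L(C)`, where `H` is a GPM of
the Euclidean dual `C^⊥` and `B` satisfies `B * H = diag(x^{mᵢ} - λᵢ⁻¹)`. -/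
theorem stmt6 {F : Type*} [Field F] [Fintype F] {ℓ : ℕ} {m : Fin ℓ → ℕ}
    (hm : ∀ i, 0 < m i) {lam : Fin ℓ → F} (hlam : ∀ i, lam i ≠ 0)
    (CC : Submodule F (∀ i, Fin (m i) → F)) (hC : IsMT lam CC)
    (H B : Matrix (Fin ℓ) (Fin ℓ) (Polynomial F))
    (hH : IsGPM (fun i => (lam i)⁻¹) m (dualCodeMT CC) H)
    (hB : B * H = Matrix.diagonal (fun i => X ^ (m i) - Polynomial.C ((lam i)⁻¹))) :
    IsMT (fun i => (lam i)⁻¹) (CC.map revEach) ∧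
    IsGPM (fun i => (lam i)⁻¹) m (CC.map revEach) B.transpose := by
  classical
  obtain ⟨hHli, hHspan⟩ := hH
  set fp : Fin ℓ → Polynomial F := fun i => X ^ (m i) - C ((lam i)⁻¹) with hfp
  set Fc : Fin ℓ → Polynomial F := fun i => ∏ j ∈ Finset.univ.erase i, fp j with hFcdef
  set Δp : Polynomial F := ∏ i, fp i with hΔpdef
  have hfm : ∀ i, (fp i).Monic := by
    intro i
    simp only [hfp]
    exact monic_X_pow_sub_C _ (hm i).ne'
  have hfd : ∀ i, (fp i).natDegree = m i := by
    intro i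
    simp only [hfp]
    exact natDegree_X_pow_sub_C
  have hFcm : ∀ i, (Fc i).Monic := fun i => monic_prod_of_monic _ _ fun j _ => hfm j
  have hΔm : Δp.Monic := monic_prod_of_monic _ _ fun i _ => hfm i
  have hΔ0 : Δp ≠ 0 := hΔm.ne_zero
  have hprod : ∀ i, fp i * Fc i = Δp := fun i => by
    rw [mul_comm]
    exact Finset.prod_erase_mul _ _ (Finset.mem_univ i)
  have hdetmul : B.det * H.det = Δp := by
    rw [← Matrix.det_mul, hB, Matrix.det_diagonal, hΔpdef]
  have hdetH : H.det ≠ 0 := fun h0 => hΔ0 (by rw [← hdetmul, h0, mul_zero])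
  have hdetB : B.det ≠ 0 := fun h0 => hΔ0 (by rw [← hdetmul, h0, zero_mul])
  -- the key matrix identity  H * diag(Fc) * B = Δp • 1
  have hdd : Matrix.diagonal Fc * Matrix.diagonal fp
      = Δp • (1 : Matrix (Fin ℓ) (Fin ℓ) (Polynomial F)) := by
    rw [Matrix.diagonal_mul_diagonal, Matrix.smul_one_eq_diagonal,
      show (fun i => Fc i * fp i) = fun _ : Fin ℓ => Δp from
        funext fun i => by rw [mul_comm]; exact hprod i]
  have hmatrix : H * Matrix.diagonal Fc * B
      = Δp • (1 : Matrix (Fin ℓ) (Fin ℓ) (Polynomial F)) := by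
    have h1 : (H * Matrix.diagonal Fc * B) * H = (Δp • 1) * H := by
      calc (H * Matrix.diagonal Fc * B) * H
          = H * (Matrix.diagonal Fc * (B * H)) := by
            rw [Matrix.mul_assoc, Matrix.mul_assoc]
        _ = H * (Δp • 1) := by rw [hB, hdd]
        _ = (Δp • 1) * H := by
            rw [Matrix.mul_smul, Matrix.smul_mul, Matrix.mul_one, Matrix.one_mul]
    have h2 : (H * Matrix.diagonal Fc * B - Δp • 1) * H = 0 := by
      rw [sub_mul, h1, sub_self]
    have h3 : H.det • (H * Matrix.diagonal Fc * B - Δp • 1) = 0 := by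
      calc H.det • (H * Matrix.diagonal Fc * B - Δp • 1)
          = (H * Matrix.diagonal Fc * B - Δp • 1) * (H.det • 1) := by
            rw [Matrix.mul_smul, Matrix.mul_one]
        _ = (H * Matrix.diagonal Fc * B - Δp • 1) * (H * H.adjugate) := by
            rw [Matrix.mul_adjugate]
        _ = ((H * Matrix.diagonal Fc * B - Δp • 1) * H) * H.adjugate :=
            (Matrix.mul_assoc _ _ _).symm
        _ = 0 := by rw [h2, Matrix.zero_mul]
    have h4 : H * Matrix.diagonal Fc * B - Δp • 1 = 0 := by
      refine Matrix.ext fun k t => ?_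
      have h5 : (H.det • (H * Matrix.diagonal Fc * B - Δp • 1)) k t
          = (0 : Matrix (Fin ℓ) (Fin ℓ) (Polynomial F)) k t := by rw [h3]
      rw [Matrix.smul_apply, smul_eq_mul, Matrix.zero_apply] at h5
      rw [Matrix.zero_apply]
      exact (mul_eq_zero.1 h5).resolve_left hdetH
    exact sub_eq_zero.1 h4
  have hscalar : ∀ k t, ∑ i, H k i * Fc i * B i t = if k = t then Δp else 0 := by
    intro k t
    calc ∑ i, H k i * Fc i * B i t = (H * Matrix.diagonal Fc * B) k t := by
          rw [Matrix.mul_apply]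
          exact Finset.sum_congr rfl fun i _ => by rw [Matrix.mul_diagonal]
      _ = (Δp • (1 : Matrix (Fin ℓ) (Fin ℓ) (Polynomial F))) k t := by rw [hmatrix]
      _ = if k = t then Δp else 0 := by
          by_cases hkt : k = t <;> simp [Matrix.smul_apply, Matrix.one_apply, hkt]
  -- transfer of the coefficient functional
  have hφtrans : ∀ (i : Fin ℓ) (a : Polynomial F),
      ((a * Fc i) %ₘ Δp).coeff (Δp.natDegree - 1) = (a %ₘ fp i).coeff (m i - 1) := by
    intro i a
    have hnd : Δp.natDegree = (fp i).natDegree + (Fc i).natDegree := by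
      rw [← hprod i, natDegree_mul (hfm i).ne_zero (hFcm i).ne_zero]
    rw [hnd, ← hprod i,
      coeff_mul_monic_mod (fp i) (Fc i) a (hfm i) (hFcm i) (by rw [hfd i]; exact hm i),
      hfd i]
  have hvanish : ∀ (u : Fin ℓ → Polynomial F) (t : Polynomial F),
      (∑ i, u i * Fc i) = Δp * t →
      ∀ s : Polynomial F, ∑ i, ((s * u i) %ₘ fp i).coeff (m i - 1) = 0 := by
    intro u t hu s
    have h1 : ∑ i, ((s * u i) %ₘ fp i).coeff (m i - 1)
        = ∑ i, ((s * u i * Fc i) %ₘ Δp).coeff (Δp.natDegree - 1) :=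
      Finset.sum_congr rfl fun i _ => (hφtrans i (s * u i)).symm
    have h2 : ∑ i, s * u i * Fc i = Δp * (s * t) := by
      calc ∑ i, s * u i * Fc i = s * ∑ i, u i * Fc i := by
            rw [Finset.mul_sum]
            exact Finset.sum_congr rfl fun i _ => by ring
        _ = Δp * (s * t) := by rw [hu]; ring
    rw [h1]
    calc ∑ i, ((s * u i * Fc i) %ₘ Δp).coeff (Δp.natDegree - 1)
        = ((∑ i, s * u i * Fc i) %ₘ Δp).coeff (Δp.natDegree - 1) := by
          rw [show ((∑ i, s * u i * Fc i) %ₘ Δp) = ∑ i, ((s * u i * Fc i) %ₘ Δp)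
            from map_sum (Polynomial.modByMonicHom Δp) _ _, finset_sum_coeff]
      _ = 0 := by
          rw [h2, (modByMonic_eq_zero_iff_dvd hΔm).2 ⟨s * t, rfl⟩, coeff_zero]
  have hdvd : ∀ u : Fin ℓ → Polynomial F,
      (∀ s : Polynomial F, ∑ i, ((s * u i) %ₘ fp i).coeff (m i - 1) = 0) →
      ∃ t, ∑ i, u i * Fc i = Δp * t := by
    intro u hu
    have hdd2 : Δp ∣ ∑ i, u i * Fc i := by
      refine dvd_of_forall_coeff_mod Δp _ hΔm fun r => ?_
      have h2 : r * ∑ i, u i * Fc i = ∑ i, r * u i * Fc i := by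
        rw [Finset.mul_sum]
        exact Finset.sum_congr rfl fun i _ => by ring
      calc ((r * ∑ i, u i * Fc i) %ₘ Δp).coeff (Δp.natDegree - 1)
          = ((∑ i, r * u i * Fc i) %ₘ Δp).coeff (Δp.natDegree - 1) := by rw [h2]
        _ = ∑ i, ((r * u i * Fc i) %ₘ Δp).coeff (Δp.natDegree - 1) := by
            rw [show ((∑ i, r * u i * Fc i) %ₘ Δp) = ∑ i, ((r * u i * Fc i) %ₘ Δp)
              from map_sum (Polynomial.modByMonicHom Δp) _ _, finset_sum_coeff]
        _ = ∑ i, ((r * u i) %ₘ fp i).coeff (m i - 1) :=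
            Finset.sum_congr rfl fun i _ => hφtrans i (r * u i)
        _ = 0 := hu r
    exact hdd2
  have hlift : ∀ v : (∀ i, Fin (m i) → F), ∃ p : Fin ℓ → Polynomial F,
      toCode (fun i => (lam i)⁻¹) m p = v := by
    intro v
    choose p hp using fun i => exists_poly_coeff (hm i) ((lam i)⁻¹) (v i)
    refine ⟨p, ?_⟩
    funext i j
    exact hp i j
  -- the central equivalence
  have key : ∀ q : Fin ℓ → Polynomial F,
      q ∈ Submodule.span (Polynomial F) (Set.range fun j => B.transpose j) ↔
      toCode (fun i => (lam i)⁻¹) m q ∈ CC.map revEach := by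
    intro q
    have hrev : toCode (fun i => (lam i)⁻¹) m q ∈ CC.map revEach ↔
        revEach (toCode (fun i => (lam i)⁻¹) m q) ∈ CC := by
      constructor
      · intro h
        obtain ⟨w, hw, hwe⟩ := Submodule.mem_map.1 h
        have hrr : revEach (toCode (fun i => (lam i)⁻¹) m q) = w := by
          rw [← hwe]
          funext i j
          show w i j.rev.rev = w i j
          rw [Fin.rev_rev]
        rwa [hrr]
      · intro h
        refine Submodule.mem_map.2 ⟨revEach (toCode (fun i => (lam i)⁻¹) m q), h, ?_⟩
        funext i j
        show toCode (fun i => (lam i)⁻¹) m q i j.rev.rev = _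
        rw [Fin.rev_rev]
    have hΦeq : ∀ p : Fin ℓ → Polynomial F,
        ∑ i, ((p i * q i) %ₘ fp i).coeff (m i - 1)
          = ∑ i, ∑ j, toCode (fun i' => (lam i')⁻¹) m p i j
              * revEach (toCode (fun i' => (lam i')⁻¹) m q) i j := by
      intro p
      refine Finset.sum_congr rfl fun i _ => ?_
      have hbase : ((p i * q i) %ₘ fp i).coeff (m i - 1)
          = ∑ j : Fin (m i), ((p i %ₘ fp i).coeff (j : ℕ))
              * ((q i %ₘ fp i).coeff (m i - 1 - (j : ℕ))) :=
        coeff_mul_mod_eq_sum (hm i) ((lam i)⁻¹) (p i) (q i)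
      rw [hbase]
      refine Finset.sum_congr rfl fun j _ => ?_
      have hidx : m i - 1 - (j : ℕ) = ((Fin.rev j : Fin (m i)) : ℕ) := by
        rw [Fin.val_rev]; omega
      rw [hidx]
      rfl
    have hHspan' : ∀ p : Fin ℓ → Polynomial F,
        p ∈ Submodule.span (Polynomial F) (Set.range fun k => H k) ↔
        toCode (fun i => (lam i)⁻¹) m p ∈ dualCodeMT CC := fun p => Set.ext_iff.1 hHspan p
    have hpair : (∀ v ∈ dualCodeMT CC,
          ∑ i, ∑ j, v i j * revEach (toCode (fun i' => (lam i')⁻¹) m q) i j = 0)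
        ↔ ∀ p ∈ Submodule.span (Polynomial F) (Set.range fun k => H k),
            ∑ i, ((p i * q i) %ₘ fp i).coeff (m i - 1) = 0 := by
      constructor
      · intro h p hp
        rw [hΦeq p]
        exact h _ ((hHspan' p).1 hp)
      · intro h v hv
        obtain ⟨p, rfl⟩ := hlift v
        rw [← hΦeq p]
        exact h p ((hHspan' p).2 hv)
    have hcore : ∀ c : Fin ℓ → Polynomial F,
        ∑ j, c j • (fun j' => B.transpose j') j = B.mulVec c := by
      intro c
      funext i
      show (∑ j, c j • B.transpose j) i = ∑ j, B i j * c j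
      rw [Finset.sum_apply]
      exact Finset.sum_congr rfl fun j _ => by
        rw [Pi.smul_apply, smul_eq_mul, Matrix.transpose_apply, mul_comm]
    have hspanB : q ∈ Submodule.span (Polynomial F) (Set.range fun j => B.transpose j) ↔
        ∃ c : Fin ℓ → Polynomial F, B.mulVec c = q := by
      rw [Submodule.mem_span_range_iff_exists_fun]
      constructor
      · rintro ⟨c, hc⟩
        exact ⟨c, by rw [← hcore c]; exact hc⟩
      · rintro ⟨c, hc⟩
        exact ⟨c, by rw [hcore c]; exact hc⟩
    have dirA : ∀ c : Fin ℓ → Polynomial F,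
        ∀ p ∈ Submodule.span (Polynomial F) (Set.range fun k => H k),
        ∀ s : Polynomial F,
        ∑ i, ((s * p i * B.mulVec c i) %ₘ fp i).coeff (m i - 1) = 0 := by
      intro c p hp
      induction hp using Submodule.span_induction with
      | mem x hx =>
        obtain ⟨k, rfl⟩ := hx
        intro s
        have hexp : ∀ i, ((s * H k i * B.mulVec c i) %ₘ fp i).coeff (m i - 1)
            = ∑ t, ((s * c t * (H k i * B i t)) %ₘ fp i).coeff (m i - 1) := by
          intro i
          have hmv : s * H k i * B.mulVec c i = ∑ t, s * c t * (H k i * B i t) := by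
            have hbv : B.mulVec c i = ∑ t, B i t * c t := rfl
            rw [hbv, Finset.mul_sum]
            exact Finset.sum_congr rfl fun t _ => by ring
          rw [hmv,
            show ((∑ t, s * c t * (H k i * B i t)) %ₘ fp i)
                = ∑ t, ((s * c t * (H k i * B i t)) %ₘ fp i)
              from map_sum (Polynomial.modByMonicHom (fp i)) _ _,
            finset_sum_coeff]
        rw [Finset.sum_congr rfl fun i _ => hexp i, Finset.sum_comm]
        refine Finset.sum_eq_zero fun t _ => ?_
        refine hvanish (fun i => H k i * B i t) (if k = t then 1 else 0) ?_ (s * c t)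
        calc ∑ i, H k i * B i t * Fc i = ∑ i, H k i * Fc i * B i t :=
              Finset.sum_congr rfl fun i _ => by ring
          _ = if k = t then Δp else 0 := hscalar k t
          _ = Δp * (if k = t then 1 else 0) := by
              by_cases hkt : k = t <;> simp [hkt]
      | zero =>
        intro s
        simp
      | add x y hx hy ihx ihy =>
        intro s
        have h1 : ∀ i, s * (x + y) i * B.mulVec c i
            = s * x i * B.mulVec c i + s * y i * B.mulVec c i := by
          intro i
          rw [Pi.add_apply]
          ring
        simp only [h1, add_modByMonic, coeff_add, Finset.sum_add_distrib, ihx s, ihy s, add_zero]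
      | smul r x hx ih =>
        intro s
        have h1 : ∀ i, s * (r • x) i * B.mulVec c i = (s * r) * x i * B.mulVec c i := by
          intro i
          rw [Pi.smul_apply, smul_eq_mul]
          ring
        simp only [h1]
        exact ih (s * r)
    have dirB : (∀ p ∈ Submodule.span (Polynomial F) (Set.range fun k => H k),
          ∑ i, ((p i * q i) %ₘ fp i).coeff (m i - 1) = 0) →
        ∃ c, B.mulVec c = q := by
      intro hpq
      have hk : ∀ k, ∃ t, ∑ i, (fun i => H k i * q i) i * Fc i = Δp * t := by
        intro k
        refine hdvd (fun i => H k i * q i) fun s => ?_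
        have hmem : (s • H k) ∈ Submodule.span (Polynomial F) (Set.range fun k => H k) :=
          Submodule.smul_mem _ s (Submodule.subset_span ⟨k, rfl⟩)
        have h2 := hpq (s • H k) hmem
        calc ∑ i, ((s * (fun i => H k i * q i) i) %ₘ fp i).coeff (m i - 1)
            = ∑ i, (((s • H k) i * q i) %ₘ fp i).coeff (m i - 1) :=
              Finset.sum_congr rfl fun i _ => by
                simp only [Pi.smul_apply, smul_eq_mul, mul_assoc]
          _ = 0 := h2
      choose cc hcc using hk
      refine ⟨cc, ?_⟩
      funext i
      have hBH : ∀ t, ∑ j2, B i j2 * H j2 t = if i = t then fp i else 0 := by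
        intro t
        have h : (B * H) i t = Matrix.diagonal fp i t := by rw [hB]
        rw [Matrix.mul_apply, Matrix.diagonal_apply] at h
        exact h
      have hΔi : Δp * B.mulVec cc i = Δp * q i := by
        calc Δp * B.mulVec cc i = ∑ t, B i t * (Δp * cc t) := by
              have hbv : B.mulVec cc i = ∑ t, B i t * cc t := rfl
              rw [hbv, Finset.mul_sum]
              exact Finset.sum_congr rfl fun t _ => by ring
          _ = ∑ t, B i t * ∑ i2, (fun i2 => H t i2 * q i2) i2 * Fc i2 := by
              refine Finset.sum_congr rfl fun t _ => ?_
              rw [← hcc t]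
          _ = ∑ t, ∑ i2, B i t * (H t i2 * q i2 * Fc i2) := by
              refine Finset.sum_congr rfl fun t _ => ?_
              rw [Finset.mul_sum]
          _ = ∑ i2, (∑ t, B i t * H t i2) * (q i2 * Fc i2) := by
              rw [Finset.sum_comm]
              refine Finset.sum_congr rfl fun i2 _ => ?_
              rw [Finset.sum_mul]
              exact Finset.sum_congr rfl fun t _ => by ring
          _ = ∑ i2, (if i = i2 then fp i * (q i2 * Fc i2) else 0) := by
              refine Finset.sum_congr rfl fun i2 _ => ?_
              rw [hBH i2]
              by_cases hii : i = i2 <;> simp [hii]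
          _ = fp i * (q i * Fc i) := by
              rw [Finset.sum_ite_eq]
              simp
          _ = Δp * q i := by
              rw [← hprod i]
              ring
      exact mul_left_cancel₀ hΔ0 hΔi
    have hdd3 : revEach (toCode (fun i => (lam i)⁻¹) m q) ∈ CC ↔
        ∀ v ∈ dualCodeMT CC,
          ∑ i, ∑ j, v i j * revEach (toCode (fun i' => (lam i')⁻¹) m q) i j = 0 := by
      conv_lhs => rw [← dualCodeMT_dualCodeMT CC]
      exact mem_dualCodeMT
    rw [hspanB, hrev, hdd3, hpair]
    constructor
    · rintro ⟨c, rfl⟩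
      intro p hp
      have := dirA c p hp 1
      simpa using this
    · exact dirB
  constructor
  · -- L(C) is Δ-MT
    intro v hv
    obtain ⟨p, hp⟩ := hlift v
    have hpmem : p ∈ Submodule.span (Polynomial F) (Set.range fun j => B.transpose j) :=
      (key p).2 (by rw [hp]; exact hv)
    have hX : (fun i => X * p i) ∈
        Submodule.span (Polynomial F) (Set.range fun j => B.transpose j) := by
      have hs := Submodule.smul_mem _ (X : Polynomial F) hpmem
      have he : (X : Polynomial F) • p = fun i => X * p i := by
        funext i
        rw [Pi.smul_apply, smul_eq_mul]
      rwa [he] at hs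
    have h2 := (key _).1 hX
    have heq : toCode (fun i => (lam i)⁻¹) m (fun i => X * p i)
        = fun i => blockShift ((lam i)⁻¹) (v i) := by
      funext i j
      have hXc : ((X * p i) %ₘ (X ^ (m i) - C ((lam i)⁻¹))).coeff (j : ℕ)
          = if (j : ℕ) = 0 then
              (lam i)⁻¹ * ((p i %ₘ (X ^ (m i) - C ((lam i)⁻¹))).coeff (m i - 1))
            else (p i %ₘ (X ^ (m i) - C ((lam i)⁻¹))).coeff ((j : ℕ) - 1) :=
        X_mul_mod_coeff (hm i) ((lam i)⁻¹) (p i) j.isLt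
      show ((X * p i) %ₘ (X ^ (m i) - C ((lam i)⁻¹))).coeff (j : ℕ)
          = blockShift ((lam i)⁻¹) (v i) j
      rw [hXc, ← hp]
      rfl
    rwa [heq] at h2
  constructor
  · -- rows of Bᵀ are linearly independent
    rw [Fintype.linearIndependent_iff]
    intro g hg j
    have hmv : B.mulVec g = 0 := by
      funext i
      have h := congrFun hg i
      rw [Finset.sum_apply] at h
      simp only [Pi.smul_apply, smul_eq_mul, Matrix.transpose_apply, Pi.zero_apply] at h
      show ∑ t, B i t * g t = 0
      calc ∑ t, B i t * g t = ∑ t, g t * B i t :=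
            Finset.sum_congr rfl fun t _ => mul_comm _ _
        _ = 0 := h
    have h2 : B.det • g = 0 := by
      calc B.det • g
          = (B.det • (1 : Matrix (Fin ℓ) (Fin ℓ) (Polynomial F))).mulVec g := by
            rw [Matrix.smul_mulVec, Matrix.one_mulVec]
        _ = (B.adjugate * B).mulVec g := by rw [Matrix.adjugate_mul]
        _ = B.adjugate.mulVec (B.mulVec g) := by rw [Matrix.mulVec_mulVec]
        _ = 0 := by rw [hmv, Matrix.mulVec_zero]
    have h3 := congrFun h2 j
    rw [Pi.smul_apply, smul_eq_mul, Pi.zero_apply] at h3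
    exact (mul_eq_zero.1 h3).resolve_left hdetB
  · -- the span of the rows of Bᵀ is the module of L(C)
    apply Set.ext
    intro q
    exact key q
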